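/- Let R be a semiartinian von Neumann regular ring with primitive factors artinian and of finite Loewy length σ+1 with σ ≥ 1. Then every countably generated weakly R-projective right R-module is projective. -/

import Mathlib

universe u

open Submodule

/-- The socle of a module: the supremum of all simple submodules. -/
noncomputable def socle (R : Type u) [Ring R] (M : Type u) [AddCommGroup M] [Module R M] :
    Submodule R M :=
  sSup {S : Submodule R M | IsAtom S}

/-- The Loewy (socle) sequence of a module, defined by transfinite recursion:
`loewy R M 0 = ⊥`, `loewy R M (α+1) / loewy R M α = Soc (M ⧸ loewy R M α)`, and unions
at limit ordinals. -/
noncomputable def loewy (R : Type u) [Ring R] (M : Type u) [AddCommGroup M] [Module R M]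
    (o : Ordinal.{u}) : Submodule R M :=
  o.limitRecOn ⊥ (fun _ N => (socle R (M ⧸ N)).comap N.mkQ)
    (fun o _ IH => ⨆ (b : Ordinal) (h : b < o), IH b h)

/-- The Loewy length of a module: the least ordinal `o` with `loewy R M o = ⊤`. -/
noncomputable def loewyLength (R : Type u) [Ring R] (M : Type u) [AddCommGroup M]
    [Module R M] : Ordinal.{u} :=
  sInf {o : Ordinal | loewy R M o = ⊤}

/-- A ring is semiartinian if every nonzero module has a nonzero socle. -/
def IsSemiartinianRing (R : Type u) [Ring R] : Prop :=
  ∀ (M : Type u) [AddCommGroup M] [Module R M], Nontrivial M → socle R M ≠ ⊥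

/-- A ring is von Neumann regular if for every `r` there is `s` with `r * s * r = r`. -/
def IsVonNeumannRegularRing (R : Type u) [Ring R] : Prop :=
  ∀ r : R, ∃ s : R, r * s * r = r

/-- `R` has primitive factors artinian: for every primitive ideal `P` (= annihilator of a
simple module), the factor `R/P` is artinian. -/
def HasPrimitiveFactorsArtinian (R : Type u) [Ring R] : Prop :=
  ∀ (M : Type u) [AddCommGroup M] [Module R M], IsSimpleModule R M →
    IsArtinian R (R ⧸ (Module.annihilator R M : Submodule R R))

/-- The `α`-th layer of the Loewy sequence of `R`, as a submodule of `R ⧸ loewy R R α`. -/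
noncomputable def loewyLayer (R : Type u) [Ring R] (α : Ordinal.{u}) :
    Submodule R (R ⧸ loewy R R α) :=
  (loewy R R (α + 1)).map (loewy R R α).mkQ

/-- The canonical projection `π_α : S_{α+1} → S_{α+1}/S_α`. -/
noncomputable def layerProj (R : Type u) [Ring R] (α : Ordinal.{u}) :
    (loewy R R (α + 1) : Submodule R R) →ₗ[R] (loewyLayer R α) :=
  LinearMap.codRestrict _ ((loewy R R α).mkQ.comp (loewy R R (α + 1)).subtype)
    (fun x => ⟨(x : R), x.2, rfl⟩)

/-- `M` is weakly `R`-projective: every homomorphism from `M` to a layer `S_{α+1}/S_α`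
(`0 < α`) with finitely generated image factors through `π_α : S_{α+1} → S_{α+1}/S_α`. -/
def IsWeaklyRProjective (R : Type u) [Ring R] (M : Type u) [AddCommGroup M]
    [Module R M] : Prop :=
  ∀ α : Ordinal.{u}, 0 < α →
    ∀ φ : M →ₗ[R] (loewyLayer R α), (LinearMap.range φ).FG →
      ∃ ψ : M →ₗ[R] (loewy R R (α + 1) : Submodule R R), (layerProj R α).comp ψ = φ

/-- `M` is layer projective: for each `0 < α`, every simple submodule of the `α`-th layer of
`M` is isomorphic to a simple (direct summand) submodule of the `α`-th layer of `R`, i.e. the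
`α`-th layer of `M` is a projective `R/S_α`-module. -/
def IsLayerProjective (R : Type u) [Ring R] (M : Type u) [AddCommGroup M]
    [Module R M] : Prop :=
  ∀ α : Ordinal.{u}, 0 < α →
    ∀ T : Submodule R ((loewy R M (α + 1)).map (loewy R M α).mkQ), IsAtom T →
      ∃ T' : Submodule R (loewyLayer R α), IsAtom T' ∧ Nonempty (T ≃ₗ[R] T')

/-- The submodule `M·S` of `M`, generated by all products `s • m` with `s ∈ S`. -/
def smulSub (R : Type u) [Ring R] (M : Type u) [AddCommGroup M] [Module R M]
    (S : Submodule R R) : Submodule R M :=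
  Submodule.span R {x : M | ∃ s ∈ S, ∃ m : M, s • m = x}


section LoewyBasic
variable {R : Type u} [Ring R] {M : Type u} [AddCommGroup M] [Module R M]

theorem loewy_zero : loewy R M 0 = ⊥ := Ordinal.limitRecOn_zero _ _ _

theorem loewy_succ (o : Ordinal.{u}) :
    loewy R M (o + 1) = (socle R (M ⧸ loewy R M o)).comap (loewy R M o).mkQ := by
  unfold loewy
  rw [Ordinal.add_one_eq_succ, Ordinal.limitRecOn_succ]

end LoewyBasic
section SocleLoewy
variable {R : Type u} [Ring R]

theorem semisimple_of_socle_eq_top {M : Type u} [AddCommGroup M] [Module R M]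
    (h : socle R M = ⊤) : IsSemisimpleModule R M := by
  apply IsSemisimpleModule.of_sSup_simples_eq_top
  rw [← h, socle]
  congr 1
  ext S
  exact isSimpleModule_iff_isAtom

theorem socle_semisimple (M : Type u) [AddCommGroup M] [Module R M] :
    IsSemisimpleModule R ↥(socle R M) := by
  have h : socle R M = ⨆ S ∈ {S : Submodule R M | IsAtom S}, S := by rw [socle, sSup_eq_iSup]
  rw [h]
  apply isSemisimpleModule_biSup_of_isSemisimpleModule_submodule
  intro S hS
  have : IsSimpleModule R ↥S := isSimpleModule_iff_isAtom.2 hS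
  infer_instance

theorem le_socle_of_semisimple {M : Type u} [AddCommGroup M] [Module R M]
    {U : Submodule R M} (h : IsSemisimpleModule R ↥U) : U ≤ socle R M := by
  have h1 : sSup {W : Submodule R ↥U | IsSimpleModule R ↥W} = ⊤ :=
    IsSemisimpleModule.sSup_simples_eq_top R ↥U
  have h2 : U = Submodule.map U.subtype ⊤ := by
    rw [Submodule.map_top, Submodule.range_subtype]
  rw [h2, ← h1, sSup_eq_iSup]
  rw [Submodule.map_iSup]
  apply iSup_le
  intro W
  rw [Submodule.map_iSup]
  apply iSup_le
  intro hW
  haveI : IsSimpleModule R (↥W) := hW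
  apply le_sSup
  have : IsSimpleModule R ↥(Submodule.map U.subtype W) :=
    IsSimpleModule.congr (Submodule.equivMapOfInjective U.subtype U.injective_subtype W).symm
  exact isSimpleModule_iff_isAtom.1 this

theorem map_socle_le {M N : Type u} [AddCommGroup M] [Module R M] [AddCommGroup N] [Module R N]
    (f : M →ₗ[R] N) : (socle R M).map f ≤ socle R N := by
  rw [socle, sSup_eq_iSup, Submodule.map_iSup]
  apply iSup_le
  intro S
  rw [Submodule.map_iSup]
  apply iSup_le
  intro hS
  have hsimp : IsSimpleModule R ↥S := isSimpleModule_iff_isAtom.2 hS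
  have : IsSemisimpleModule R ↥(Submodule.map f S) := by
    have : IsSemisimpleModule R ↥S := inferInstance
    have hrange : Submodule.map f S = LinearMap.range (f.comp S.subtype) := by
      rw [LinearMap.range_comp, Submodule.range_subtype]
    rw [hrange]
    exact IsSemisimpleModule.range _
  exact le_socle_of_semisimple this

theorem comap_socle_le {M N : Type u} [AddCommGroup M] [Module R M] [AddCommGroup N] [Module R N]
    (f : M →ₗ[R] N) (hf : Function.Injective f) : (socle R N).comap f ≤ socle R M := by
  set U := (socle R N).comap f
  have h1 : Submodule.map f U ≤ socle R N := Submodule.map_comap_le _ _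
  have e1 : ↥U ≃ₗ[R] ↥(Submodule.map f U) := Submodule.equivMapOfInjective f hf U
  have e2 : ↥((Submodule.map f U).comap (socle R N).subtype) ≃ₗ[R] ↥(Submodule.map f U) :=
    Submodule.comap_equiv_self_of_inj_of_le (socle R N).injective_subtype
      (by rw [Submodule.range_subtype]; exact h1)
  have : IsSemisimpleModule R ↥((Submodule.map f U).comap (socle R N).subtype) := by
    have := socle_semisimple (R := R) N
    infer_instance
  have : IsSemisimpleModule R ↥(Submodule.map f U) := IsSemisimpleModule.congr e2.symm
  have : IsSemisimpleModule R ↥U := IsSemisimpleModule.congr e1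
  exact le_socle_of_semisimple this

theorem loewy_natSucc (M : Type u) [AddCommGroup M] [Module R M] (n : ℕ) :
    loewy R M ((n + 1 : ℕ) : Ordinal) =
      (socle R (M ⧸ loewy R M (n : Ordinal))).comap (loewy R M (n : Ordinal)).mkQ := by
  have : ((n + 1 : ℕ) : Ordinal) = (n : Ordinal) + 1 := by push_cast; ring
  rw [this, loewy_succ]

theorem map_loewy_le {M N : Type u} [AddCommGroup M] [Module R M] [AddCommGroup N] [Module R N]
    (f : M →ₗ[R] N) (n : ℕ) : (loewy R M n).map f ≤ loewy R N n := by
  induction n with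
  | zero =>
    rw [Nat.cast_zero, loewy_zero, loewy_zero, Submodule.map_bot]
  | succ n ih =>
    rw [loewy_natSucc, loewy_natSucc]
    rintro y ⟨x, hx, rfl⟩
    have hle : loewy R M (n : Ordinal) ≤ (loewy R N (n : Ordinal)).comap f :=
      Submodule.map_le_iff_le_comap.1 ih
    set g := Submodule.mapQ (loewy R M (n : Ordinal)) (loewy R N (n : Ordinal)) f hle
    have hg : (loewy R N (n : Ordinal)).mkQ (f x) = g ((loewy R M (n : Ordinal)).mkQ x) := by
      simp [g, Submodule.mapQ_apply, Submodule.mkQ_apply]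
    show (loewy R N (n : Ordinal)).mkQ (f x) ∈ socle R _
    rw [hg]
    exact map_socle_le g ⟨_, hx, rfl⟩

theorem comap_loewy_le {M : Type u} [AddCommGroup M] [Module R M] (N : Submodule R M) (n : ℕ) :
    (loewy R M n).comap N.subtype ≤ loewy R ↥N n := by
  induction n with
  | zero =>
    rw [Nat.cast_zero, loewy_zero, loewy_zero, Submodule.comap_bot, Submodule.ker_subtype]
  | succ n ih =>
    rw [loewy_natSucc, loewy_natSucc]
    intro x hx
    have hle : loewy R ↥N (n : Ordinal) ≤ (loewy R M (n : Ordinal)).comap N.subtype :=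
      Submodule.map_le_iff_le_comap.1 (map_loewy_le N.subtype n)
    set g := Submodule.mapQ (loewy R ↥N (n : Ordinal)) (loewy R M (n : Ordinal)) N.subtype hle
    have hginj : Function.Injective g := by
      rw [← LinearMap.ker_eq_bot, eq_bot_iff]
      intro y hy
      obtain ⟨z, rfl⟩ := (loewy R ↥N (n : Ordinal)).mkQ_surjective y
      have : (N.subtype z) ∈ loewy R M (n : Ordinal) := by
        have := hy
        rw [LinearMap.mem_ker] at this
        rw [Submodule.mkQ_apply, Submodule.mapQ_apply, ← Submodule.mkQ_apply,
          Submodule.mkQ_apply, Submodule.Quotient.mk_eq_zero] at this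
        exact this
      have : z ∈ loewy R ↥N (n : Ordinal) := ih this
      simpa [Submodule.Quotient.mk_eq_zero] using this
    have hmem : g ((loewy R ↥N (n : Ordinal)).mkQ x) ∈ socle R (M ⧸ loewy R M (n : Ordinal)) := by
      rw [Submodule.mkQ_apply, Submodule.mapQ_apply]
      exact hx
    exact comap_socle_le g hginj hmem

theorem loewy_eq_top_module {n : ℕ} (hlen : loewy R R (n : Ordinal) = ⊤)
    (M : Type u) [AddCommGroup M] [Module R M] : loewy R M (n : Ordinal) = ⊤ := by
  rw [eq_top_iff]
  intro x _
  have h1 : (1 : R) ∈ loewy R R (n : Ordinal) := hlen ▸ trivial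
  have := map_loewy_le (LinearMap.toSpanSingleton R M x) n ⟨1, h1, rfl⟩
  simpa using this

end SocleLoewy

section Regular
variable {R : Type u} [Ring R]

theorem vnr_exists_idem_span_singleton (hvnr : IsVonNeumannRegularRing R) (x : R) :
    ∃ f : R, f * f = f ∧ Submodule.span R {x} = Submodule.span R {f} := by
  obtain ⟨y, hy⟩ := hvnr x
  refine ⟨y * x, ?_, ?_⟩
  · calc y * x * (y * x) = y * (x * y * x) := by noncomm_ring
    _ = y * x := by rw [hy]
  · apply le_antisymm
    · rw [Submodule.span_le, Set.singleton_subset_iff]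
      have : x = x * (y * x) := by rw [← mul_assoc, hy]
      rw [SetLike.mem_coe, Submodule.mem_span_singleton]
      exact ⟨x, by rw [smul_eq_mul, ← this]⟩
    · rw [Submodule.span_le, Set.singleton_subset_iff]
      rw [SetLike.mem_coe, Submodule.mem_span_singleton]
      exact ⟨y, by rw [smul_eq_mul]⟩

theorem vnr_span_pair (hvnr : IsVonNeumannRegularRing R) (e x : R) (he : e * e = e) :
    ∃ h : R, h * h = h ∧
      Submodule.span R {e} ⊔ Submodule.span R {x} = Submodule.span R {h} := by
  set x' := x - x * e with hx'
  have hsup : Submodule.span R {e} ⊔ Submodule.span R {x} =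
      Submodule.span R {e} ⊔ Submodule.span R {x'} := by
    apply le_antisymm
    · apply sup_le le_sup_left
      rw [Submodule.span_le, Set.singleton_subset_iff]
      have : x = x' + x * e := by rw [hx']; noncomm_ring
      rw [SetLike.mem_coe, this]
      apply Submodule.add_mem
      · exact Submodule.mem_sup_right (Submodule.mem_span_singleton.2 ⟨1, by simp⟩)
      · exact Submodule.mem_sup_left (Submodule.mem_span_singleton.2 ⟨x, by simp⟩)
    · apply sup_le le_sup_left
      rw [Submodule.span_le, Set.singleton_subset_iff]
      rw [SetLike.mem_coe, hx']
      apply Submodule.sub_mem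
      · exact Submodule.mem_sup_right (Submodule.mem_span_singleton.2 ⟨1, by simp⟩)
      · exact Submodule.mem_sup_left (Submodule.mem_span_singleton.2 ⟨x, by simp⟩)
  have hx'e : x' * e = 0 := by rw [hx']; rw [sub_mul, mul_assoc, he]; noncomm_ring
  obtain ⟨y, hy⟩ := hvnr x'
  set f := y * x' with hf
  have hff : f * f = f := by
    rw [hf]
    calc y * x' * (y * x') = y * (x' * y * x') := by noncomm_ring
    _ = y * x' := by rw [hy]
  have hfe : f * e = 0 := by rw [hf, mul_assoc, hx'e, mul_zero]
  have hspanf : Submodule.span R {x'} = Submodule.span R {f} := by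
    apply le_antisymm
    · rw [Submodule.span_le, Set.singleton_subset_iff, SetLike.mem_coe,
        Submodule.mem_span_singleton]
      exact ⟨x', by rw [smul_eq_mul, hf, ← mul_assoc, hy]⟩
    · rw [Submodule.span_le, Set.singleton_subset_iff, SetLike.mem_coe,
        Submodule.mem_span_singleton]
      exact ⟨y, by rw [smul_eq_mul, hf]⟩
  set h := e + f - e * f with hh
  have hhh : h * h = h := by
    have h1 : h * e = e := by
      calc h * e = e * e + f * e - e * (f * e) := by rw [hh]; noncomm_ring
      _ = e := by rw [he, hfe, mul_zero]; noncomm_ring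
    have h2 : h * f = f := by
      calc h * f = e * f + (f * f - e * (f * f)) := by rw [hh]; noncomm_ring
      _ = f := by rw [hff]; noncomm_ring
    calc h * h = h * e + h * f - (h * e) * f := by rw [hh]; noncomm_ring
    _ = h := by rw [h1, h2, hh]
  refine ⟨h, hhh, ?_⟩
  rw [hsup, hspanf]
  apply le_antisymm
  · apply sup_le <;>
      (rw [Submodule.span_le, Set.singleton_subset_iff, SetLike.mem_coe,
        Submodule.mem_span_singleton])
    · refine ⟨e, ?_⟩
      rw [smul_eq_mul, hh]
      calc e * (e + f - e * f) = e * e + e * f - (e * e) * f := by noncomm_ring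
      _ = e := by rw [he]; noncomm_ring
    · refine ⟨f, ?_⟩
      rw [smul_eq_mul, hh]
      calc f * (e + f - e * f) = f * e + f * f - (f * e) * f := by noncomm_ring
      _ = f := by rw [hfe, hff]; noncomm_ring
  · rw [Submodule.span_le, Set.singleton_subset_iff, SetLike.mem_coe, hh]
    apply Submodule.sub_mem
    · apply Submodule.add_mem
      · exact Submodule.mem_sup_left (Submodule.mem_span_singleton.2 ⟨1, by simp⟩)
      · exact Submodule.mem_sup_right (Submodule.mem_span_singleton.2 ⟨1, by simp⟩)
    · exact Submodule.mem_sup_right (Submodule.mem_span_singleton.2 ⟨e, by simp⟩)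

theorem vnr_fg_ideal_idem (hvnr : IsVonNeumannRegularRing R) (I : Submodule R R) (hI : I.FG) :
    ∃ e : R, e * e = e ∧ I = Submodule.span R {e} := by
  obtain ⟨s, rfl⟩ := hI
  classical
  induction s using Finset.induction_on with
  | empty =>
    refine ⟨0, by simp, ?_⟩
    simp [Submodule.span_empty]
  | @insert x s hx ih =>
    obtain ⟨e, he, hes⟩ := ih
    obtain ⟨h, hh, hspan⟩ := vnr_span_pair hvnr e x he
    refine ⟨h, hh, ?_⟩
    rw [Finset.coe_insert, Submodule.span_insert, hes, sup_comm, hspan]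

/-- Complement of a span of an idempotent. -/
theorem idem_compl (e : R) (he : e * e = e) :
    Submodule.span R {e} ⊔ Submodule.span R {1 - e} = ⊤ ∧
      Submodule.span R {e} ⊓ Submodule.span R {1 - e} = ⊥ := by
  constructor
  · rw [eq_top_iff]
    intro r _
    have : r = r * e + r * (1 - e) := by noncomm_ring
    rw [this]
    exact Submodule.add_mem _
      (Submodule.mem_sup_left (Submodule.mem_span_singleton.2 ⟨r, by simp⟩))
      (Submodule.mem_sup_right (Submodule.mem_span_singleton.2 ⟨r, by simp⟩))
  · rw [eq_bot_iff]
    rintro r ⟨h1, h2⟩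
    obtain ⟨a, ha⟩ := Submodule.mem_span_singleton.1 h1
    obtain ⟨b, hb⟩ := Submodule.mem_span_singleton.1 h2
    rw [smul_eq_mul] at ha hb
    have hre : r * e = r := by
      rw [← ha, mul_assoc, he, ha]
    have : r * e = 0 := by
      rw [← hb, mul_assoc]
      have : (1 - e) * e = 0 := by rw [sub_mul, he]; noncomm_ring
      rw [this, mul_zero]
    rw [Submodule.mem_bot, ← hre, this]

end Regular

section Retraction
variable {R : Type u} [Ring R]

/-- Over a von Neumann regular ring, every f.g. submodule of a finite free module admits a
retraction. -/
theorem vnr_fg_submodule_retract (hvnr : IsVonNeumannRegularRing R) :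
    ∀ (k : ℕ) (N : Submodule R (Fin k → R)), N.FG →
      ∃ p : (Fin k → R) →ₗ[R] ↥N, ∀ (x : Fin k → R) (hx : x ∈ N), p x = ⟨x, hx⟩ := by
  intro k
  induction k with
  | zero =>
    intro N _
    refine ⟨0, fun x hx => ?_⟩
    have : (Subsingleton (Fin 0 → R)) := by infer_instance
    apply Subtype.ext
    simp only [LinearMap.zero_apply, Submodule.coe_zero]
    exact (Subsingleton.elim _ _)
  | succ k ih =>
    intro N hN
    set c : (Fin (k + 1) → R) →ₗ[R] R := LinearMap.proj 0 with hc
    set d : (Fin (k + 1) → R) →ₗ[R] (Fin k → R) := LinearMap.funLeft R R Fin.succ with hd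
    set emb : (Fin k → R) →ₗ[R] (Fin (k + 1) → R) :=
      { toFun := fun v => Fin.cons 0 v
        map_add' := by
          intro v w
          funext i
          refine Fin.cases ?_ (fun j => ?_) i <;> simp
        map_smul' := by
          intro r v
          funext i
          refine Fin.cases ?_ (fun j => ?_) i <;> simp } with hemb
    have hce : ∀ v, c (emb v) = 0 := fun v => by simp [hc, hemb]
    have hde : ∀ v, d (emb v) = v := fun v => by
      funext j; simp [hd, hemb, LinearMap.funLeft]
    have hrec : ∀ w : Fin (k + 1) → R, c w = 0 → emb (d w) = w := by
      intro w hw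
      funext i
      refine Fin.cases ?_ (fun j => ?_) i
      · simpa [hc, hemb] using hw.symm
      · simp [hd, hemb, LinearMap.funLeft]
    set I : Submodule R R := N.map c with hI
    obtain ⟨e, he, hIe⟩ := vnr_fg_ideal_idem hvnr I (hN.map c)
    have heI : e ∈ I := by rw [hIe]; exact Submodule.mem_span_singleton_self e
    obtain ⟨x₀, hx₀N, hx₀⟩ := heI
    have hcI : ∀ v ∈ N, (c v) * e = c v := by
      intro v hv
      have : c v ∈ I := ⟨v, hv, rfl⟩
      rw [hIe, Submodule.mem_span_singleton] at this
      obtain ⟨a, ha⟩ := this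
      rw [← ha, smul_eq_mul, mul_assoc, he]
    set N₀ : Submodule R (Fin (k + 1) → R) := N ⊓ LinearMap.ker c with hN₀
    set Φ : ↥N →ₗ[R] (Fin (k + 1) → R) :=
      N.subtype - (LinearMap.toSpanSingleton R _ x₀).comp (c.comp N.subtype) with hΦ
    have hΦval : ∀ v : ↥N, Φ v = (v : Fin (k + 1) → R) - c (v : Fin (k + 1) → R) • x₀ := by
      intro v; simp [hΦ, LinearMap.toSpanSingleton, LinearMap.smulRight]
    have hrangeΦ : LinearMap.range Φ = N₀ := by
      apply le_antisymm
      · rintro _ ⟨v, rfl⟩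
        rw [hΦval]
        refine Submodule.mem_inf.2 ⟨Submodule.sub_mem _ v.2 (Submodule.smul_mem _ _ hx₀N), ?_⟩
        refine LinearMap.mem_ker.2 ?_
        rw [map_sub, map_smul, smul_eq_mul, hx₀, hcI _ v.2, sub_self]
      · intro v hv
        obtain ⟨hvN, hvc⟩ := Submodule.mem_inf.1 hv
        refine ⟨⟨v, hvN⟩, ?_⟩
        rw [hΦval]
        have hvc' : c v = 0 := LinearMap.mem_ker.1 hvc
        simp [hvc']
    have hN₀fg : N₀.FG := by
      rw [← hrangeΦ, LinearMap.range_eq_map]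
      exact Submodule.FG.map _ (Module.Finite.iff_fg.2 hN).fg_top
    set N₀' : Submodule R (Fin k → R) := N₀.comap emb with hN₀'
    have hmapN₀' : N₀'.map emb = N₀ := by
      apply le_antisymm (Submodule.map_comap_le _ _)
      intro w hw
      refine ⟨d w, ?_, hrec w hw.2⟩
      show emb (d w) ∈ N₀
      rw [hrec w hw.2]; exact hw
    have hembinj : Function.Injective emb := by
      intro a b hab
      have := congrArg d hab
      rwa [hde, hde] at this
    have hN₀'fg : N₀'.FG := Submodule.fg_of_fg_map_injective emb hembinj (hmapN₀' ▸ hN₀fg)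
    obtain ⟨p₀, hp₀⟩ := ih N₀' hN₀'fg
    set incl : ↥N₀' →ₗ[R] ↥N :=
      LinearMap.codRestrict N (emb.comp N₀'.subtype) (fun u => by
        have : emb u.val ∈ N₀ := u.2
        exact this.1) with hincl
    set part1 : (Fin (k + 1) → R) →ₗ[R] ↥N :=
      LinearMap.codRestrict N ((LinearMap.toSpanSingleton R _ x₀).comp c)
        (fun v => Submodule.smul_mem _ _ hx₀N) with hpart1
    set corr : (Fin (k + 1) → R) →ₗ[R] (Fin (k + 1) → R) :=
      LinearMap.id - (LinearMap.toSpanSingleton R _ x₀).comp c with hcorr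
    refine ⟨part1 + incl.comp (p₀.comp (d.comp corr)), ?_⟩
    intro x hx
    have hcw : c (x - c x • x₀) = 0 := by
      rw [map_sub, map_smul, smul_eq_mul, hx₀, hcI _ hx, sub_self]
    have hw : x - c x • x₀ ∈ N₀ :=
      Submodule.mem_inf.2 ⟨Submodule.sub_mem _ hx (Submodule.smul_mem _ _ hx₀N),
        LinearMap.mem_ker.2 hcw⟩
    have hcorrx : corr x = x - c x • x₀ := by
      simp [hcorr, LinearMap.toSpanSingleton, LinearMap.smulRight]
    have hccorr : c (corr x) = 0 := by rw [hcorrx]; exact hcw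
    have hdw : d (corr x) ∈ N₀' := by
      show emb (d (corr x)) ∈ N₀
      rw [hrec _ hccorr, hcorrx]
      exact hw
    have happ : (part1 + incl.comp (p₀.comp (d.comp corr))) x
        = part1 x + incl (p₀ (d (corr x))) := rfl
    rw [happ, hp₀ _ hdw]
    apply Subtype.ext
    show c x • x₀ + emb (d (corr x)) = x
    rw [hrec _ hccorr, hcorrx]
    abel

theorem vnr_fg_submodule_projective (hvnr : IsVonNeumannRegularRing R) (k : ℕ)
    (N : Submodule R (Fin k → R)) (hN : N.FG) : Module.Projective R ↥N := by
  obtain ⟨p, hp⟩ := vnr_fg_submodule_retract hvnr k N hN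
  refine Module.Projective.of_split N.subtype p ?_
  ext x
  simp [hp x.val x.2]

/-- Over a von Neumann regular ring, any f.g. submodule of a f.g. projective module admits a
retraction, and is projective. -/
theorem vnr_fg_sub_of_proj_retract (hvnr : IsVonNeumannRegularRing R)
    (P : Type u) [AddCommGroup P] [Module R P] [Module.Finite R P] [Module.Projective R P]
    (N : Submodule R P) (hN : N.FG) :
    ∃ p : P →ₗ[R] ↥N, ∀ (x : P) (hx : x ∈ N), p x = ⟨x, hx⟩ := by
  obtain ⟨k, τ, hτ⟩ := Module.Finite.exists_fin' R P
  obtain ⟨s, hs⟩ := Module.projective_lifting_property τ LinearMap.id hτ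
  set G : Submodule R (Fin k → R) := N.map s with hG
  obtain ⟨p', hp'⟩ := vnr_fg_submodule_retract hvnr k G (hN.map s)
  set back : ↥G →ₗ[R] ↥N :=
    LinearMap.codRestrict N (τ.comp G.subtype) (fun g => by
      obtain ⟨x, hxN, hxs⟩ := g.2
      show τ g.val ∈ N
      rw [← hxs]
      have : τ (s x) = x := by
        have := congrFun (congrArg DFunLike.coe hs) x
        simpa using this
      rw [this]; exact hxN) with hback
  refine ⟨back.comp (p'.comp s), ?_⟩
  intro x hx
  have hsx : s x ∈ G := ⟨x, hx, rfl⟩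
  have h1 : p' (s x) = ⟨s x, hsx⟩ := hp' _ hsx
  apply Subtype.ext
  show τ ((p' (s x)).val) = x
  rw [h1]
  have := congrFun (congrArg DFunLike.coe hs) x
  simpa using this

theorem vnr_fg_sub_of_proj_projective (hvnr : IsVonNeumannRegularRing R)
    (P : Type u) [AddCommGroup P] [Module R P] [Module.Finite R P] [Module.Projective R P]
    (N : Submodule R P) (hN : N.FG) : Module.Projective R ↥N := by
  obtain ⟨p, hp⟩ := vnr_fg_sub_of_proj_retract hvnr P N hN
  refine Module.Projective.of_split N.subtype p ?_
  ext x
  simp [hp x.val x.2]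

section Semisimplify
variable {R : Type u} [Ring R]

theorem quot_cyclic_compl (hvnr : IsVonNeumannRegularRing R) (P : Submodule R R)
    (hP2 : ∀ p ∈ P, ∀ r : R, p * r ∈ P) (x : R ⧸ P) :
    ∃ W : Submodule R (R ⧸ P), IsCompl (Submodule.span R {x}) W := by
  obtain ⟨a, rfl⟩ := P.mkQ_surjective x
  obtain ⟨f, hf, hspan⟩ := vnr_exists_idem_span_singleton hvnr a
  have hx : Submodule.span R {P.mkQ a} = Submodule.map P.mkQ (Submodule.span R {f}) := by
    rw [← hspan, Submodule.map_span, Set.image_singleton]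
  refine ⟨Submodule.map P.mkQ (Submodule.span R {1 - f}), ?_⟩
  rw [isCompl_iff]
  constructor
  · rw [disjoint_iff, eq_bot_iff, hx]
    rintro u ⟨hu1, hu2⟩
    obtain ⟨v, hv, rfl⟩ := hu1
    obtain ⟨w, hw, hwv⟩ := hu2
    obtain ⟨r, hr⟩ := Submodule.mem_span_singleton.1 hv
    obtain ⟨s, hs⟩ := Submodule.mem_span_singleton.1 hw
    rw [smul_eq_mul] at hr hs
    have hvf : v * f = v := by rw [← hr, mul_assoc, hf]
    have hwf : w * f = 0 := by
      rw [← hs, mul_assoc]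
      have : (1 - f) * f = 0 := by rw [sub_mul, hf]; noncomm_ring
      rw [this, mul_zero]
    have hvw : w - v ∈ P := by
      rw [← Submodule.Quotient.eq]
      exact hwv
    have : (w - v) * f ∈ P := hP2 _ hvw f
    rw [sub_mul, hvf, hwf, zero_sub] at this
    have hvP : v ∈ P := by
      have := P.neg_mem this
      rwa [neg_neg] at this
    show P.mkQ v ∈ ⊥
    rw [Submodule.mem_bot, Submodule.mkQ_apply, Submodule.Quotient.mk_eq_zero]
    exact hvP
  · rw [codisjoint_iff, hx, ← Submodule.map_sup, (idem_compl f hf).1, Submodule.map_top,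
      Submodule.range_mkQ]

theorem semisimple_of_artinian_cyclic_compl (A : Type u) [AddCommGroup A] [Module R A]
    [IsArtinian R A] (hcyc : ∀ x : A, ∃ W, IsCompl (Submodule.span R {x}) W) :
    IsSemisimpleModule R A := by
  refine (isSemisimpleModule_iff R A).2 ⟨?_⟩
  intro U
  set S := {V : Submodule R A | U ⊔ V = ⊤} with hS
  have hStop : (⊤ : Submodule R A) ∈ S := by simp [hS]
  obtain ⟨V, hVS, hVmin⟩ :=
    (IsWellFounded.wf : WellFounded ((· < ·) : Submodule R A → Submodule R A → Prop)).has_min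
      S ⟨⊤, hStop⟩
  refine ⟨V, ?_⟩
  rw [isCompl_iff]
  constructor
  · rw [disjoint_iff]
    by_contra hbot
    obtain ⟨w, hwUV, hw0⟩ := Submodule.exists_mem_ne_zero_of_ne_bot hbot
    obtain ⟨W, hW⟩ := hcyc w
    have hwU : w ∈ U := (Submodule.mem_inf.1 hwUV).1
    have hwV : w ∈ V := (Submodule.mem_inf.1 hwUV).2
    have hspanV : Submodule.span R {w} ≤ V := by
      rw [Submodule.span_le, Set.singleton_subset_iff]; exact hwV
    have hVdec : Submodule.span R {w} ⊔ (W ⊓ V) = V := by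
      rw [← sup_inf_assoc_of_le _ hspanV, codisjoint_iff.1 hW.codisjoint, top_inf_eq]
    have hV'lt : W ⊓ V < V := by
      refine lt_of_le_of_ne inf_le_right ?_
      intro heq
      have hwW : w ∈ W := (heq ▸ (Submodule.mem_inf.1 (heq ▸ hwV))).1
      have : w ∈ Submodule.span R {w} ⊓ W :=
        Submodule.mem_inf.2 ⟨Submodule.mem_span_singleton_self w, hwW⟩
      rw [disjoint_iff.1 hW.disjoint, Submodule.mem_bot] at this
      exact hw0 this
    have hV'S : W ⊓ V ∈ S := by
      show U ⊔ (W ⊓ V) = ⊤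
      have hspanU : Submodule.span R {w} ≤ U := by
        rw [Submodule.span_le, Set.singleton_subset_iff]; exact hwU
      calc U ⊔ (W ⊓ V) = U ⊔ (Submodule.span R {w} ⊔ (W ⊓ V)) := by
            rw [← sup_assoc, sup_eq_left.2 hspanU]
      _ = U ⊔ V := by rw [hVdec]
      _ = ⊤ := hVS
    exact hVmin _ hV'S hV'lt
  · rw [codisjoint_iff]
    exact hVS

end Semisimplify

section BaerFG
variable {R : Type u} [Ring R]

theorem baer_of_fg_semisimple (hvnr : IsVonNeumannRegularRing R)
    (hpfa : HasPrimitiveFactorsArtinian R)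
    (C : Type u) [AddCommGroup C] [Module R C] [Module.Finite R C] [IsSemisimpleModule R C] :
    Module.Baer R C := by
  classical
  -- decompose ⊤ into finitely many simple submodules
  have hsimple : sSup {W : Submodule R C | IsSimpleModule R ↥W} = ⊤ :=
    IsSemisimpleModule.sSup_simples_eq_top R C
  have hcompact : IsCompactElement (⊤ : Submodule R C) :=
    (Submodule.fg_iff_compact _).1 Module.Finite.fg_top
  obtain ⟨t, hts, htsup⟩ := (CompleteLattice.isCompactElement_iff_exists_le_sSup_of_le_sSup _ _).1 hcompact _ (le_of_eq hsimple.symm)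
  -- the annihilator
  set P : Submodule R R := t.inf (fun W => (Module.annihilator R ↥W : Submodule R R)) with hP
  have hmemP : ∀ p : R, p ∈ P ↔ ∀ W ∈ t, p ∈ (Module.annihilator R ↥W : Submodule R R) := by
    intro p; rw [hP]; exact Submodule.mem_finsetInf
  have hP2 : ∀ p ∈ P, ∀ r : R, p * r ∈ P := by
    intro p hp r
    rw [hmemP] at hp ⊢
    intro W hW
    have := hp W hW
    rw [Module.mem_annihilator] at this ⊢
    intro m
    rw [mul_smul, this]
  -- P annihilates C
  have hPann : ∀ p ∈ P, ∀ c : C, p • c = 0 := by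
    intro p hp
    set K : Submodule R C :=
      { carrier := {c : C | ∀ q ∈ P, q • c = 0}
        add_mem' := by
          intro a b ha hb q hq
          rw [smul_add, ha q hq, hb q hq, add_zero]
        zero_mem' := by intro q hq; rw [smul_zero]
        smul_mem' := by
          intro s c hc q hq
          rw [← mul_smul]
          exact hc (q * s) (hP2 q hq s) } with hK
    intro c
    have hKtop : (⊤ : Submodule R C) ≤ K := by
      refine le_trans htsup ?_
      rw [Finset.sup_id_eq_sSup, sSup_eq_iSup']
      apply iSup_le
      rintro ⟨W, hW⟩
      intro w hw q hq
      have hq' : q ∈ (Module.annihilator R ↥W : Submodule R R) := (hmemP q).1 hq W hW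
      rw [Module.mem_annihilator] at hq'
      have h2 := hq' ⟨w, hw⟩
      have hcoe : (q • (⟨w, hw⟩ : ↥W) : ↥W) = (⟨q • w, W.smul_mem q hw⟩ : ↥W) := rfl
      rw [hcoe] at h2
      exact congrArg Subtype.val h2
    exact hKtop Submodule.mem_top p hp
  -- the quotient R ⧸ P is artinian
  haveI hart : ∀ W : {W // W ∈ t}, IsArtinian R
      (R ⧸ (Module.annihilator R ↥(W.val) : Submodule R R)) := by
    rintro ⟨W, hW⟩
    have : IsSimpleModule R ↥W := hts hW
    exact hpfa ↥W this
  set Θ : R →ₗ[R] ((W : {W // W ∈ t}) → R ⧸ (Module.annihilator R ↥(W.val) : Submodule R R)) :=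
    LinearMap.pi (fun W => (Module.annihilator R ↥(W.val) : Submodule R R).mkQ) with hΘ
  have hkerΘ : LinearMap.ker Θ = P := by
    rw [hΘ, LinearMap.ker_pi]
    ext p
    rw [Submodule.mem_iInf, hmemP]
    constructor
    · intro h W hW
      have := h ⟨W, hW⟩
      rwa [LinearMap.mem_ker, Submodule.mkQ_apply, Submodule.Quotient.mk_eq_zero] at this
    · rintro h ⟨W, hW⟩
      rw [LinearMap.mem_ker, Submodule.mkQ_apply, Submodule.Quotient.mk_eq_zero]
      exact h W hW
  haveI hartA : IsArtinian R (R ⧸ P) := by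
    have hinj : Function.Injective (P.liftQ Θ (le_of_eq hkerΘ.symm)) := by
      rw [← LinearMap.ker_eq_bot]
      exact Submodule.ker_liftQ_eq_bot _ _ _ (le_of_eq hkerΘ)
    exact isArtinian_of_injective _ hinj
  haveI hssA : IsSemisimpleModule R (R ⧸ P) :=
    semisimple_of_artinian_cyclic_compl _ (quot_cyclic_compl hvnr P hP2)
  -- Baer criterion
  intro I f
  set σ : ↥I →ₗ[R] ↥(Submodule.map P.mkQ I) :=
    LinearMap.codRestrict _ (P.mkQ.comp I.subtype) (fun x => ⟨x.val, x.2, rfl⟩) with hσ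
  have hσsurj : Function.Surjective σ := by
    rintro ⟨j, x, hxI, rfl⟩
    exact ⟨⟨x, hxI⟩, rfl⟩
  have hkerσf : LinearMap.ker σ ≤ LinearMap.ker f := by
    intro u hu
    have huP : u.val ∈ P := by
      have := congrArg Subtype.val (LinearMap.mem_ker.1 hu)
      rwa [← Submodule.Quotient.mk_eq_zero]
    obtain ⟨y, hy⟩ := hvnr u.val
    have hself : ((u.val * y) • u : ↥I) = u := by
      apply Subtype.ext
      show (u.val * y) • u.val = u.val
      rw [smul_eq_mul, mul_assoc]
      rw [← mul_assoc]
      exact hy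
    rw [LinearMap.mem_ker, ← hself, map_smul, mul_smul]
    rw [hPann u.val huP (y • f u)]
  set e₁ := LinearMap.quotKerEquivOfSurjective σ hσsurj with he₁
  set h₁ := (LinearMap.ker σ).liftQ f hkerσf with hh₁
  set h : ↥(Submodule.map P.mkQ I) →ₗ[R] C := h₁.comp (e₁.symm : _ →ₗ[R] _) with hh
  have hhσ : ∀ u : ↥I, h (σ u) = f u := by
    intro u
    have he : e₁ (Submodule.Quotient.mk u) = σ u := by
      rw [he₁]
      simp [LinearMap.quotKerEquivOfSurjective, LinearEquiv.trans_apply,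
        LinearMap.quotKerEquivRange_apply_mk]
    have : e₁.symm (σ u) = Submodule.Quotient.mk u := by
      rw [LinearEquiv.symm_apply_eq, he]
    rw [hh, LinearMap.comp_apply]
    show h₁ (e₁.symm (σ u)) = f u
    rw [this, hh₁, Submodule.liftQ_apply]
  obtain ⟨D, hD⟩ := exists_isCompl (Submodule.map P.mkQ I)
  set π := Submodule.linearProjOfIsCompl _ _ hD with hπ
  refine ⟨h.comp (π.comp P.mkQ), ?_⟩
  intro x hx
  have hmem : P.mkQ x ∈ Submodule.map P.mkQ I := ⟨x, hx, rfl⟩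
  have hπx : π (P.mkQ x) = ⟨P.mkQ x, hmem⟩ := by
    have := Submodule.linearProjOfIsCompl_apply_left hD ⟨P.mkQ x, hmem⟩
    rw [hπ]
    exact this
  have happ : (h.comp (π.comp P.mkQ)) x = h (π (P.mkQ x)) := rfl
  rw [happ, hπx]
  have hσx : (⟨P.mkQ x, hmem⟩ : ↥(Submodule.map P.mkQ I)) = σ ⟨x, hx⟩ := rfl
  rw [hσx, hhσ]

end BaerFG

section Layers
variable {R : Type u} [Ring R]

theorem loewyLayer_eq_socle (α : Ordinal.{u}) :
    loewyLayer R α = socle R (R ⧸ loewy R R α) := by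
  rw [loewyLayer, loewy_succ, Submodule.map_comap_eq, Submodule.range_mkQ, top_inf_eq]

theorem layer_semisimple (α : Ordinal.{u}) : IsSemisimpleModule R ↥(loewyLayer R α) := by
  rw [loewyLayer_eq_socle]
  exact socle_semisimple _

theorem layerProj_zero_bijective : Function.Bijective (layerProj R 0) := by
  constructor
  · intro x y hxy
    apply Subtype.ext
    have hval := congrArg Subtype.val hxy
    have h1 : (loewy R R 0).mkQ x.val = (loewy R R 0).mkQ y.val := hval
    have h2 : x.val - y.val ∈ loewy R R (0 : Ordinal.{u}) := by
      rw [← Submodule.Quotient.eq]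
      exact h1
    rw [loewy_zero, Submodule.mem_bot, sub_eq_zero] at h2
    exact h2
  · rintro ⟨y, s, hs, rfl⟩
    exact ⟨⟨s, hs⟩, rfl⟩

theorem lift_through_layer {M : Type u} [AddCommGroup M] [Module R M]
    (hM : IsWeaklyRProjective R M) (α : Ordinal.{u})
    (φ : M →ₗ[R] ↥(loewyLayer R α)) (hφ : (LinearMap.range φ).FG) :
    ∃ ψ : M →ₗ[R] ↥(loewy R R (α + 1) : Submodule R R), (layerProj R α).comp ψ = φ := by
  rcases eq_or_ne α 0 with rfl | hne
  · set e := LinearEquiv.ofBijective (layerProj R 0) layerProj_zero_bijective with he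
    refine ⟨(e.symm : _ →ₗ[R] _).comp φ, ?_⟩
    apply LinearMap.ext
    intro x
    show layerProj R 0 (e.symm (φ x)) = φ x
    have : layerProj R 0 (e.symm (φ x)) = e (e.symm (φ x)) := rfl
    rw [this, LinearEquiv.apply_symm_apply]
  · exact hM α (pos_iff_ne_zero.2 hne) φ hφ

theorem weaklyRProjective_submodule (hvnr : IsVonNeumannRegularRing R)
    (hpfa : HasPrimitiveFactorsArtinian R) {M : Type u} [AddCommGroup M] [Module R M]
    (hM : IsWeaklyRProjective R M) (N : Submodule R M) : IsWeaklyRProjective R ↥N := by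
  intro α hα φ hφ
  set C := LinearMap.range φ with hC
  haveI : IsSemisimpleModule R ↥(loewyLayer R α) := layer_semisimple α
  haveI : IsSemisimpleModule R ↥C := inferInstance
  haveI : Module.Finite R ↥C := Module.Finite.iff_fg.2 hφ
  have hbaer := baer_of_fg_semisimple hvnr hpfa ↥C
  set φ' : ↥N →ₗ[R] ↥C := φ.rangeRestrict with hφ'
  obtain ⟨g, hg⟩ := hbaer.extension_property N.subtype N.injective_subtype φ'
  set ψφ : M →ₗ[R] ↥(loewyLayer R α) := C.subtype.comp g with hψφ
  have hrangeg : LinearMap.range g = ⊤ := by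
    rw [eq_top_iff]
    intro y _
    obtain ⟨x, hx⟩ := φ.surjective_rangeRestrict y
    refine ⟨N.subtype x, ?_⟩
    rw [← hx]
    exact DFunLike.congr_fun hg x
  have hrange : (LinearMap.range ψφ).FG := by
    have : LinearMap.range ψφ = C := by
      rw [hψφ, LinearMap.range_comp, hrangeg, Submodule.map_top, Submodule.range_subtype]
    rw [this]
    exact hφ
  obtain ⟨ψ, hψ⟩ := hM α hα ψφ hrange
  refine ⟨ψ.comp N.subtype, ?_⟩
  apply LinearMap.ext
  intro x
  have h1 : layerProj R α (ψ (N.subtype x)) = ψφ (N.subtype x) := by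
    have := congrArg (fun (m : M →ₗ[R] ↥(loewyLayer R α)) => m (N.subtype x)) hψ
    exact this
  show layerProj R α (ψ (N.subtype x)) = φ x
  rw [h1]
  have h2 : g (N.subtype x) = φ' x := by
    have := congrArg (fun (m : ↥N →ₗ[R] ↥C) => m x) hg
    exact this
  show C.subtype (g (N.subtype x)) = φ x
  rw [h2]
  rfl

end Layers

section SimpleEmbed
variable {R : Type u} [Ring R]

theorem simple_module_finite (T : Type u) [AddCommGroup T] [Module R T]
    (hT : IsSimpleModule R T) : Module.Finite R T := by
  haveI := hT
  haveI : Nontrivial T := IsSimpleModule.nontrivial R T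
  obtain ⟨t1, ht1⟩ := exists_ne (0 : T)
  constructor
  refine ⟨{t1}, ?_⟩
  rw [Finset.coe_singleton]
  rw [LinearMap.span_singleton_eq_range]
  rw [LinearMap.range_eq_top]
  exact IsSimpleModule.toSpanSingleton_surjective R ht1

theorem submodule_of_simple_fg {T : Type u} [AddCommGroup T] [Module R T]
    (hT : IsSimpleModule R T) (U : Submodule R T) : U.FG := by
  haveI := hT
  rcases eq_bot_or_eq_top U with rfl | rfl
  · exact Submodule.fg_bot
  · exact (simple_module_finite T hT).fg_top

/-- Every simple module embeds into some layer of the Loewy sequence of `R`, provided the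
Loewy sequence reaches `⊤` at a natural number stage. -/
theorem simple_embeds_layer {m : ℕ} (hlen : loewy R R ((m : ℕ) : Ordinal) = ⊤)
    (T : Type u) [AddCommGroup T] [Module R T] (hT : IsSimpleModule R T) :
    ∃ (n : ℕ) (eT : T →ₗ[R] ↥(loewyLayer R (n : Ordinal))),
      Function.Injective eT ∧ (LinearMap.range eT).FG := by
  classical
  haveI := hT
  haveI : Nontrivial T := IsSimpleModule.nontrivial R T
  obtain ⟨t1, ht1⟩ := exists_ne (0 : T)
  set pred : ℕ → Prop := fun n => ∃ s ∈ loewy R R (n : Ordinal), ∃ t : T, s • t ≠ 0 with hpred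
  have hex : ∃ n, pred n := by
    refine ⟨m, 1, ?_, t1, by simpa using ht1⟩
    rw [hlen]; trivial
  have hn₁ : pred (Nat.find hex) := Nat.find_spec hex
  have hn₁pos : Nat.find hex ≠ 0 := by
    intro h0
    obtain ⟨s, hs, t, hst⟩ := hn₁
    rw [h0] at hs
    rw [Nat.cast_zero, loewy_zero, Submodule.mem_bot] at hs
    rw [hs, zero_smul] at hst
    exact hst rfl
  obtain ⟨α₀, hsucc⟩ := Nat.exists_eq_succ_of_ne_zero hn₁pos
  have hα₀ : ∀ s ∈ loewy R R (α₀ : Ordinal), ∀ t : T, s • t = 0 := by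
    have hnp : ¬pred α₀ := Nat.find_min hex (by rw [hsucc]; exact Nat.lt_succ_self α₀)
    intro s hs t
    by_contra hne
    exact hnp ⟨s, hs, t, hne⟩
  rw [hsucc] at hn₁
  have hn₁' : pred (α₀ + 1) := hn₁
  obtain ⟨s₀, hs₀mem, t₀, hs₀t₀⟩ := hn₁'
  -- the lift to the quotient
  set H : (R ⧸ loewy R R (α₀ : Ordinal)) →ₗ[R] T :=
    (loewy R R (α₀ : Ordinal)).liftQ (LinearMap.toSpanSingleton R T t₀)
      (fun s hs => by
        rw [LinearMap.mem_ker, LinearMap.toSpanSingleton_apply]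
        exact hα₀ s hs t₀) with hH
  set gbar : ↥(loewyLayer R (α₀ : Ordinal)) →ₗ[R] T :=
    H.comp (loewyLayer R (α₀ : Ordinal)).subtype with hgbar
  have hcast : ((α₀ + 1 : ℕ) : Ordinal) = (α₀ : Ordinal) + 1 := by
    rw [Nat.cast_add, Nat.cast_one]
  have hs₀mem' : s₀ ∈ loewy R R ((α₀ : Ordinal) + 1) := by rw [← hcast]; exact hs₀mem
  have hmkmem : (loewy R R (α₀ : Ordinal)).mkQ s₀ ∈ loewyLayer R (α₀ : Ordinal) :=
    ⟨s₀, hs₀mem', rfl⟩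
  have hgbar_surj : LinearMap.range gbar = ⊤ := by
    rcases eq_bot_or_eq_top (LinearMap.range gbar) with hbot | htop
    · exfalso
      have : gbar ⟨(loewy R R (α₀ : Ordinal)).mkQ s₀, hmkmem⟩ = s₀ • t₀ := by
        rw [hgbar]
        show H ((loewy R R (α₀ : Ordinal)).mkQ s₀) = s₀ • t₀
        rw [hH, Submodule.mkQ_apply, Submodule.liftQ_apply, LinearMap.toSpanSingleton_apply]
      have hmem : s₀ • t₀ ∈ LinearMap.range gbar := ⟨_, this⟩
      rw [hbot, Submodule.mem_bot] at hmem
      exact hs₀t₀ hmem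
    · exact htop
  -- complement of the kernel
  haveI : IsSemisimpleModule R ↥(loewyLayer R (α₀ : Ordinal)) := layer_semisimple _
  obtain ⟨Cc, hCc⟩ := exists_isCompl (LinearMap.ker gbar)
  set uu : ↥Cc →ₗ[R] T := gbar.comp Cc.subtype with huu
  have huuinj : Function.Injective uu := by
    rw [← LinearMap.ker_eq_bot (M := ↥Cc) (M₂ := T), eq_bot_iff]
    intro x hx
    have : x.val ∈ LinearMap.ker gbar ⊓ Cc := Submodule.mem_inf.2 ⟨LinearMap.mem_ker.1 hx, x.2⟩
    rw [disjoint_iff.1 hCc.disjoint, Submodule.mem_bot] at this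
    rw [Submodule.mem_bot]
    exact Subtype.ext this
  have huusurj : Function.Surjective uu := by
    intro y
    have hy : y ∈ LinearMap.range gbar := by rw [hgbar_surj]; trivial
    obtain ⟨z, hz⟩ := hy
    have hz2 : z ∈ LinearMap.ker gbar ⊔ Cc := by
      rw [codisjoint_iff.1 hCc.codisjoint]; trivial
    obtain ⟨k, hk, c, hc, rfl⟩ := Submodule.mem_sup.1 hz2
    refine ⟨⟨c, hc⟩, ?_⟩
    rw [huu]
    show gbar c = y
    rw [← hz, map_add, LinearMap.mem_ker.1 hk, zero_add]
  set eqv := LinearEquiv.ofBijective uu ⟨huuinj, huusurj⟩ with heqv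
  refine ⟨α₀, Cc.subtype.comp (eqv.symm : T →ₗ[R] ↥Cc), ?_, ?_⟩
  · exact Cc.injective_subtype.comp eqv.symm.injective
  · have : LinearMap.range (Cc.subtype.comp (eqv.symm : T →ₗ[R] ↥Cc)) = Cc := by
      rw [LinearMap.range_comp]
      rw [LinearEquiv.range]
      rw [Submodule.map_top, Submodule.range_subtype]
    rw [this]
    haveI : Module.Finite R T := simple_module_finite T hT
    haveI : Module.Finite R ↥Cc := Module.Finite.equiv eqv.symm
    have : (⊤ : Submodule R ↥Cc).FG := Module.Finite.fg_top
    have h2 := Submodule.FG.map Cc.subtype this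
    rwa [Submodule.map_top, Submodule.range_subtype] at h2

end SimpleEmbed

section FGTheorem
variable {R : Type u} [Ring R]

theorem vnr_fg_submodule_retract_fintype (hvnr : IsVonNeumannRegularRing R)
    (ι : Type u) [Fintype ι] (N : Submodule R (ι → R)) (hN : N.FG) :
    ∃ p : (ι → R) →ₗ[R] ↥N, ∀ (x : ι → R) (hx : x ∈ N), p x = ⟨x, hx⟩ := by
  set k := Fintype.card ι with hk
  set E : (ι → R) ≃ₗ[R] (Fin k → R) :=
    LinearEquiv.funCongrLeft R R (Fintype.equivFin ι).symm with hE
  set N' : Submodule R (Fin k → R) := N.map (E : (ι → R) →ₗ[R] (Fin k → R)) with hN'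
  obtain ⟨p', hp'⟩ := vnr_fg_submodule_retract hvnr k N' (hN.map _)
  set j : ↥N' →ₗ[R] ↥N :=
    LinearMap.codRestrict N ((E.symm : (Fin k → R) →ₗ[R] (ι → R)).comp N'.subtype)
      (fun u => by
        obtain ⟨x, hx, hEx⟩ := u.2
        show E.symm u.val ∈ N
        rw [← hEx]
        simpa using hx) with hj
  refine ⟨j.comp (p'.comp (E : (ι → R) →ₗ[R] (Fin k → R))), ?_⟩
  intro x hx
  have hEx : E x ∈ N' := ⟨x, hx, rfl⟩
  have h1 : p' (E x) = ⟨E x, hEx⟩ := hp' _ hEx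
  have happ : (j.comp (p'.comp (E : (ι → R) →ₗ[R] (Fin k → R)))) x = j (p' (E x)) := rfl
  rw [happ, h1]
  apply Subtype.ext
  show E.symm (E x) = x
  simp

theorem fg_weakly_projective (hvnr : IsVonNeumannRegularRing R)
    (hpfa : HasPrimitiveFactorsArtinian R) {m : ℕ} (hlen : loewy R R ((m : ℕ) : Ordinal) = ⊤) :
    ∀ (n : ℕ) ⦃M : Type u⦄ [AddCommGroup M] [Module R M], Module.Finite R M →
      IsWeaklyRProjective R M → loewy R M (n : Ordinal) = ⊤ → Module.Projective R M := by
  intro n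
  induction n with
  | zero =>
    intro M _ _ _ _ hl
    rw [Nat.cast_zero, loewy_zero] at hl
    haveI : Subsingleton M := by
      constructor
      intro a b
      have ha : a ∈ (⊥ : Submodule R M) := by rw [hl]; trivial
      have hb : b ∈ (⊥ : Submodule R M) := by rw [hl]; trivial
      rw [Submodule.mem_bot] at ha hb
      rw [ha, hb]
    exact ⟨⟨0, fun x => Subsingleton.elim _ _⟩⟩
  | succ n ih =>
    intro M iAG iM hfin hw hl
    classical
    set L := loewy R M (n : Ordinal) with hL
    have hsoc : socle R (M ⧸ L) = ⊤ := by
      rw [loewy_natSucc] at hl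
      rw [eq_top_iff]
      rintro y -
      obtain ⟨x, rfl⟩ := L.mkQ_surjective y
      have hx : x ∈ (socle R (M ⧸ L)).comap L.mkQ := by rw [hl]; trivial
      exact hx
    haveI hssQ : IsSemisimpleModule R (M ⧸ L) := semisimple_of_socle_eq_top hsoc
    haveI : Module.Finite R (M ⧸ L) := Module.Finite.quotient R L
    -- finite independent family of simple submodules with sup ⊤
    obtain ⟨s, hsind, hssup, hssimple⟩ :=
      IsSemisimpleModule.exists_sSupIndep_sSup_simples_eq_top (R := R) (M := M ⧸ L)
    have hcompact : IsCompactElement (⊤ : Submodule R (M ⧸ L)) :=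
      (Submodule.fg_iff_compact _).1 Module.Finite.fg_top
    obtain ⟨t, hts, htsup⟩ := (CompleteLattice.isCompactElement_iff_exists_le_sSup_of_le_sSup _ _).1 hcompact s (le_of_eq hssup.symm)
    set ι := ↥(↑t : Set (Submodule R (M ⧸ L))) with hι
    set A : ι → Submodule R (M ⧸ L) := Subtype.val with hA
    have hind : iSupIndep A := by
      have h1 : sSupIndep (↑t : Set (Submodule R (M ⧸ L))) := (hsind.mono hts)
      exact (sSupIndep_iff _).1 h1
    have hAsup : ⨆ i, A i = ⊤ := by
      rw [eq_top_iff]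
      refine le_trans htsup ?_
      rw [Finset.sup_id_eq_sSup, sSup_eq_iSup']
    have hinternal : DirectSum.IsInternal A :=
      (DirectSum.isInternal_submodule_iff_iSupIndep_and_iSup_eq_top A).2 ⟨hind, hAsup⟩
    set e := LinearEquiv.ofBijective (DirectSum.coeLinearMap A) hinternal with he
    have hsimp : ∀ i : ι, IsSimpleModule R ↥(A i) := fun i => hssimple _ (hts i.2)
    have hembed := fun i : ι => simple_embeds_layer hlen ↥(A i) (hsimp i)
    choose nf ef hefinj heffg using hembed
    set φ : ∀ i : ι, M →ₗ[R] ↥(loewyLayer R ((nf i : ℕ) : Ordinal)) := fun i =>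
      (ef i).comp ((DirectSum.component R ι (fun j => ↥(A j)) i).comp
        (e.symm.toLinearMap.comp L.mkQ)) with hφ
    have hφfg : ∀ i : ι, (LinearMap.range (φ i)).FG := by
      intro i
      rw [hφ]
      rw [LinearMap.range_comp]
      exact Submodule.FG.map _ (submodule_of_simple_fg (hsimp i) _)
    have hlift := fun i : ι => lift_through_layer hw ((nf i : ℕ) : Ordinal) (φ i) (hφfg i)
    choose ψ hψ using hlift
    set ρ : ∀ i : ι, M →ₗ[R] R := fun i =>
      (loewy R R (((nf i : ℕ) : Ordinal) + 1)).subtype.comp (ψ i) with hρ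
    set Ψ : M →ₗ[R] (ι → R) := LinearMap.pi ρ with hΨ
    have hker : LinearMap.ker Ψ ≤ L := by
      intro x hx
      have hx0 : ∀ i : ι, ρ i x = 0 := by
        intro i
        have := LinearMap.mem_ker.1 hx
        have happ : Ψ x i = ρ i x := rfl
        rw [← happ, this]
        rfl
      have hψ0 : ∀ i : ι, ψ i x = 0 := by
        intro i
        apply Subtype.ext
        exact hx0 i
      have hφ0 : ∀ i : ι, φ i x = 0 := by
        intro i
        have := DFunLike.congr_fun (hψ i) x
        rw [LinearMap.comp_apply, hψ0 i, map_zero] at this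
        exact this.symm
      have hcomp0 : ∀ i : ι,
          DirectSum.component R ι (fun j => ↥(A j)) i (e.symm (L.mkQ x)) = 0 := by
        intro i
        apply hefinj i
        rw [map_zero]
        exact hφ0 i
      have hsymm0 : e.symm (L.mkQ x) = 0 := by
        apply DirectSum.ext_component R
        intro i
        rw [map_zero]
        exact hcomp0 i
      have hq0 : L.mkQ x = 0 := by
        have := congrArg e hsymm0
        rwa [LinearEquiv.apply_symm_apply, map_zero] at this
      rw [← Submodule.ker_mkQ L]
      exact LinearMap.mem_ker.2 hq0
    set Im := LinearMap.range Ψ with hIm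
    have hImFG : Im.FG := by
      rw [hIm, LinearMap.range_eq_map]
      exact Submodule.FG.map _ Module.Finite.fg_top
    obtain ⟨pr, hpr⟩ := vnr_fg_submodule_retract_fintype hvnr ι Im hImFG
    haveI hprojIm : Module.Projective R ↥Im := by
      refine Module.Projective.of_split Im.subtype pr ?_
      ext x
      simp [hpr x.val x.2]
    set Ψ' := Ψ.rangeRestrict with hΨ'
    have hΨ's : Function.Surjective Ψ' := Ψ.surjective_rangeRestrict
    obtain ⟨sec, hsec⟩ := Module.projective_lifting_property Ψ' LinearMap.id hΨ's
    have hsec' : ∀ y : ↥Im, Ψ' (sec y) = y := by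
      intro y
      have := DFunLike.congr_fun hsec y
      exact this
    set K := LinearMap.ker Ψ' with hK
    have hKΨ : K = LinearMap.ker Ψ := by rw [hK, LinearMap.ker_rangeRestrict]
    have hmemK : ∀ x : M, x - sec (Ψ' x) ∈ K := by
      intro x
      rw [hK, LinearMap.mem_ker, map_sub, hsec' (Ψ' x), sub_self]
    have hKfg : K.FG := by
      have hrange : K = LinearMap.range (LinearMap.id - sec.comp Ψ') := by
        apply le_antisymm
        · intro x hx
          refine ⟨x, ?_⟩
          have : Ψ' x = 0 := LinearMap.mem_ker.1 hx
          show x - sec (Ψ' x) = x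
          rw [this, map_zero, sub_zero]
        · rintro _ ⟨x, rfl⟩
          exact hmemK x
      rw [hrange, LinearMap.range_eq_map]
      exact Submodule.FG.map _ Module.Finite.fg_top
    haveI : Module.Finite R ↥K := Module.Finite.iff_fg.2 hKfg
    have hwK : IsWeaklyRProjective R ↥K := weaklyRProjective_submodule hvnr hpfa hw K
    have hlK : loewy R ↥K (n : Ordinal) = ⊤ := by
      rw [eq_top_iff]
      intro x _
      apply comap_loewy_le K n
      show x.val ∈ L
      apply hker
      rw [← hKΨ]
      exact x.2
    haveI hprojK : Module.Projective R ↥K := ih (M := ↥K) inferInstance hwK hlK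
    -- assemble
    obtain ⟨h₁, hh₁⟩ := Module.projective_lifting_property (Finsupp.linearCombination R id)
      K.subtype (Finsupp.linearCombination_id_surjective R M)
    obtain ⟨h₂, hh₂⟩ := Module.projective_lifting_property (Finsupp.linearCombination R id)
      sec (Finsupp.linearCombination_id_surjective R M)
    set rK : M →ₗ[R] ↥K :=
      LinearMap.codRestrict K (LinearMap.id - sec.comp Ψ') (fun x => hmemK x) with hrK
    refine ⟨⟨(h₁.comp rK) + (h₂.comp Ψ'), fun x => ?_⟩⟩
    have hcalc : Finsupp.linearCombination R id ((h₁.comp rK + h₂.comp Ψ') x)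
        = Finsupp.linearCombination R id (h₁ (rK x)) + Finsupp.linearCombination R id (h₂ (Ψ' x)) := by
      rw [LinearMap.add_apply, map_add]
      rfl
    rw [hcalc]
    have e1 : Finsupp.linearCombination R id (h₁ (rK x)) = (rK x).val := by
      have := DFunLike.congr_fun hh₁ (rK x)
      exact this
    have e2 : Finsupp.linearCombination R id (h₂ (Ψ' x)) = sec (Ψ' x) := by
      have := DFunLike.congr_fun hh₂ (Ψ' x)
      exact this
    rw [e1, e2]
    show (x - sec (Ψ' x)) + sec (Ψ' x) = x
    abel

end FGTheorem

/-- Over a semiartinian von Neumann regular ring with primitive factors artinian, of finite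
Loewy length `σ + 1` with `σ ≥ 1`, every countably generated weakly `R`-projective module is
projective. -/
theorem countablyGenerated_weaklyRProjective_projective
    (R : Type u) [Ring R] (hsa : IsSemiartinianRing R)
    (hvnr : IsVonNeumannRegularRing R) (hpfa : HasPrimitiveFactorsArtinian R)
    (σ : ℕ) (hσ : 1 ≤ σ)
    (hlen : loewy R R ((σ : Ordinal.{u}) + 1) = ⊤)
    (hne : loewy R R (σ : Ordinal.{u}) ≠ ⊤)
    (M : Type u) [AddCommGroup M] [Module R M]
    (hcg : ∃ S : Set M, S.Countable ∧ Submodule.span R S = ⊤)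
    (hM : IsWeaklyRProjective R M) :
    Module.Projective R M := by
  classical
  obtain ⟨S, hScount, hSspan⟩ := hcg
  have hlen' : loewy R R (((σ + 1 : ℕ)) : Ordinal) = ⊤ := by
    rw [Nat.cast_add, Nat.cast_one]; exact hlen
  rcases S.eq_empty_or_nonempty with rfl | hSne
  · rw [Submodule.span_empty] at hSspan
    haveI : Subsingleton M := by
      constructor
      intro a b
      have ha : a ∈ (⊥ : Submodule R M) := by rw [hSspan]; trivial
      have hb : b ∈ (⊥ : Submodule R M) := by rw [hSspan]; trivial
      rw [Submodule.mem_bot] at ha hb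
      rw [ha, hb]
    exact ⟨⟨0, fun x => Subsingleton.elim _ _⟩⟩
  obtain ⟨g, hg⟩ := Set.Countable.exists_eq_range hScount hSne
  set F : ℕ → Submodule R M := fun n => Submodule.span R (g '' {i | i < n}) with hF
  have hmono : ∀ n, F n ≤ F (n + 1) := by
    intro n
    apply Submodule.span_mono
    apply Set.image_mono
    intro i hi
    exact lt_trans hi (Nat.lt_succ_self n)
  have hFle : ∀ k n, k ≤ n → F k ≤ F n := fun k n h =>
    monotone_nat_of_le_succ hmono h
  have hFfg : ∀ n, (F n).FG := by
    intro n
    apply Submodule.fg_def.2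
    refine ⟨g '' {i | i < n}, ?_, rfl⟩
    have : ({i : ℕ | i < n} : Set ℕ).Finite := Set.finite_Iio n
    exact this.image g
  have hsupF : (⨆ n, F n) = ⊤ := by
    rw [eq_top_iff, ← hSspan, hg, Submodule.span_le]
    rintro y ⟨i, rfl⟩
    have hmem : g i ∈ F (i + 1) :=
      Submodule.subset_span ⟨i, Nat.lt_succ_self i, rfl⟩
    exact Submodule.mem_iSup_of_mem (i + 1) hmem
  have hdir : Directed (· ≤ ·) F :=
    (monotone_nat_of_le_succ hmono).directed_le
  have hFsup : ∀ x : M, ∃ n, x ∈ F n := by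
    intro x
    have hx : x ∈ ⨆ n, F n := by rw [hsupF]; trivial
    exact (Submodule.mem_iSup_of_directed F hdir).1 hx
  haveI fgF : ∀ n, Module.Finite R ↥(F n) := fun n => Module.Finite.iff_fg.2 (hFfg n)
  have hwF : ∀ n, IsWeaklyRProjective R ↥(F n) := fun n =>
    weaklyRProjective_submodule hvnr hpfa hM (F n)
  haveI hprojF : ∀ n, Module.Projective R ↥(F n) := fun n =>
    fg_weakly_projective hvnr hpfa hlen' (σ + 1) (fgF n) (hwF n)
      (loewy_eq_top_module hlen' ↥(F n))
  -- retractions along the chain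
  have hretr : ∀ n, ∃ p : ↥(F (n + 1)) →ₗ[R] ↥(F n),
      ∀ x : ↥(F n), p (Submodule.inclusion (hmono n) x) = x := by
    intro n
    set N : Submodule R ↥(F (n + 1)) := (F n).comap (F (n + 1)).subtype with hN
    have hNfg : N.FG := by
      have hrangeN : N = LinearMap.range (Submodule.inclusion (hmono n)) := by
        apply le_antisymm
        · intro x hx
          exact ⟨⟨x.val, hx⟩, rfl⟩
        · rintro _ ⟨y, rfl⟩
          exact y.2
      rw [hrangeN, LinearMap.range_eq_map]
      exact Submodule.FG.map _ Module.Finite.fg_top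
    obtain ⟨retr, hretr⟩ := vnr_fg_sub_of_proj_retract hvnr ↥(F (n + 1)) N hNfg
    set uu : ↥N →ₗ[R] ↥(F n) :=
      LinearMap.codRestrict (F n) ((F (n + 1)).subtype.comp N.subtype) (fun x => x.2) with huu
    refine ⟨uu.comp retr, ?_⟩
    intro x
    have hmem : (Submodule.inclusion (hmono n) x) ∈ N := x.2
    have h1 : retr (Submodule.inclusion (hmono n) x) = ⟨Submodule.inclusion (hmono n) x, hmem⟩ :=
      hretr _ hmem
    have happ : (uu.comp retr) (Submodule.inclusion (hmono n) x)
        = uu (retr (Submodule.inclusion (hmono n) x)) := rfl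
    rw [happ, h1]
    apply Subtype.ext
    rfl
  choose proj hproj using hretr
  -- the recursive construction of compatible sections
  have hbase : ∃ gm : ↥(F 0) →ₗ[R] (M →₀ R),
      (Finsupp.linearCombination R id).comp gm = (F 0).subtype :=
    Module.projective_lifting_property _ _ (Finsupp.linearCombination_id_surjective R M)
  have hstep : ∀ (n : ℕ) (gm : ↥(F n) →ₗ[R] (M →₀ R)),
      (Finsupp.linearCombination R id).comp gm = (F n).subtype →
      ∃ gm' : ↥(F (n + 1)) →ₗ[R] (M →₀ R),
        ((Finsupp.linearCombination R id).comp gm' = (F (n + 1)).subtype ∧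
          gm'.comp (Submodule.inclusion (hmono n)) = gm) := by
    intro n gm hgm
    obtain ⟨h₀, hh₀⟩ := Module.projective_lifting_property (Finsupp.linearCombination R id)
      (F (n + 1)).subtype (Finsupp.linearCombination_id_surjective R M)
    set j := Submodule.inclusion (hmono n) with hj
    set G' : ↥(F (n + 1)) →ₗ[R] (M →₀ R) :=
      gm.comp (proj n) + h₀.comp (LinearMap.id - j.comp (proj n)) with hG'
    refine ⟨G', ?_, ?_⟩
    · apply LinearMap.ext
      intro x
      have hc : (Finsupp.linearCombination R id) (G' x)
          = (Finsupp.linearCombination R id) (gm (proj n x))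
            + (Finsupp.linearCombination R id) (h₀ (x - j (proj n x))) := by
        rw [hG', LinearMap.add_apply, map_add]
        rfl
      show (Finsupp.linearCombination R id) (G' x) = ((x : ↥(F (n + 1))) : M)
      rw [hc]
      have e1 : (Finsupp.linearCombination R id) (gm (proj n x)) = ((proj n x : ↥(F n)) : M) :=
        DFunLike.congr_fun hgm (proj n x)
      have e2 : (Finsupp.linearCombination R id) (h₀ (x - j (proj n x)))
          = ((x - j (proj n x) : ↥(F (n + 1))) : M) :=
        DFunLike.congr_fun hh₀ (x - j (proj n x))
      rw [e1, e2]
      show ((proj n x : ↥(F n)) : M) + (((x : ↥(F (n+1))) : M) - ((j (proj n x) : ↥(F (n+1))) : M))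
        = (x : M)
      have : ((j (proj n x) : ↥(F (n+1))) : M) = ((proj n x : ↥(F n)) : M) := rfl
      rw [this]
      abel
    · apply LinearMap.ext
      intro x
      have hc : (G'.comp j) x
          = gm (proj n (j x)) + h₀ (j x - j (proj n (j x))) := rfl
      rw [hc, hproj n x]
      show gm x + h₀ (j x - j x) = gm x
      rw [sub_self, map_zero, add_zero]
  choose stepf hstep1 hstep2 using hstep
  set build : ∀ n, {gm : ↥(F n) →ₗ[R] (M →₀ R) //
      (Finsupp.linearCombination R id).comp gm = (F n).subtype} := fun n =>
    Nat.rec ⟨Classical.choose hbase, Classical.choose_spec hbase⟩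
      (fun k prev => ⟨stepf k prev.1 prev.2, hstep1 k prev.1 prev.2⟩) n with hbuild
  have hcompat : ∀ n, (build (n + 1)).1.comp (Submodule.inclusion (hmono n)) = (build n).1 :=
    fun n => hstep2 n (build n).1 (build n).2
  have hval : ∀ (x : M) (nn kk : ℕ) (hx : x ∈ F nn) (hk : nn ≤ kk),
      (build kk).1 ⟨x, hFle nn kk hk hx⟩ = (build nn).1 ⟨x, hx⟩ := by
    intro x nn kk hx hk
    induction hk with
    | refl => rfl
    | @step kk hk ih =>
      have h1 : (build (kk + 1)).1 ⟨x, hFle nn (kk + 1) (Nat.le_succ_of_le hk) hx⟩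
          = (build (kk + 1)).1 (Submodule.inclusion (hmono kk) ⟨x, hFle nn kk hk hx⟩) := rfl
      rw [h1, ← ih]
      exact DFunLike.congr_fun (hcompat kk) ⟨x, hFle nn kk hk hx⟩
  set sfun : M → (M →₀ R) := fun x =>
    (build (Nat.find (hFsup x))).1 ⟨x, Nat.find_spec (hFsup x)⟩ with hsfun
  have hsval : ∀ (n : ℕ) (x : M) (hx : x ∈ F n), sfun x = (build n).1 ⟨x, hx⟩ := by
    intro n x hx
    have h1 : Nat.find (hFsup x) ≤ n := Nat.find_min' (hFsup x) hx
    rw [hsfun]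
    exact (hval x (Nat.find (hFsup x)) n (Nat.find_spec (hFsup x)) h1).symm
  have hadd : ∀ x y : M, sfun (x + y) = sfun x + sfun y := by
    intro x y
    obtain ⟨nx, hnx⟩ := hFsup x
    obtain ⟨ny, hny⟩ := hFsup y
    set n := max nx ny with hn
    have hx : x ∈ F n := hFle nx n (le_max_left _ _) hnx
    have hy : y ∈ F n := hFle ny n (le_max_right _ _) hny
    have hxy : x + y ∈ F n := (F n).add_mem hx hy
    rw [hsval n x hx, hsval n y hy, hsval n (x + y) hxy]
    have : (⟨x + y, hxy⟩ : ↥(F n)) = ⟨x, hx⟩ + ⟨y, hy⟩ := rfl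
    rw [this, map_add]
  have hsmul : ∀ (r : R) (x : M), sfun (r • x) = r • sfun x := by
    intro r x
    obtain ⟨nx, hnx⟩ := hFsup x
    have hrx : r • x ∈ F nx := (F nx).smul_mem r hnx
    rw [hsval nx x hnx, hsval nx (r • x) hrx]
    have : (⟨r • x, hrx⟩ : ↥(F nx)) = r • ⟨x, hnx⟩ := rfl
    rw [this, map_smul]
  refine ⟨⟨{ toFun := sfun, map_add' := hadd, map_smul' := hsmul }, fun x => ?_⟩⟩
  show Finsupp.linearCombination R id (sfun x) = x
  rw [hsval (Nat.find (hFsup x)) x (Nat.find_spec (hFsup x))]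
  exact DFunLike.congr_fun (build (Nat.find (hFsup x))).2 ⟨x, Nat.find_spec (hFsup x)⟩
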